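/- Let X = ℝ and ℋ := { ψ_{a,b} : a, b ∈ ℝ } where ψ_{a,b}(x) := a x² + b. (i) If C ⊆ ℋ is ℋ-convex and A ⊆ ℝ² is the parameter set with C = { ψ_{a,b} : (a,b) ∈ A }, then A is closed, convex and satisfies A − ℝ²₊ ⊆ A, where ℝ²₊ := {(a,b) : a ≥ 0, b ≥ 0}. (ii) Conversely, if A ⊆ ℝ² is closed, convex, satisfies A − ℝ²₊ ⊆ A, and the pointwise supremum sup_{(a,b) ∈ A} ψ_{a,b} is not identically +∞, then C := { ψ_{a,b} : (a,b) ∈ A } is ℋ-convex. -/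

import Mathlib

open Set
open scoped Pointwise

variable {X : Type*}

/-- A space of abstract linear functions on `X`: a nonempty family of real-valued
functions closed under addition, each of whose members admits additive decompositions
of every length `m ≥ 1` inside the family. -/
def IsLinSpace (L : Set (X → ℝ)) : Prop :=
  L.Nonempty ∧
    (∀ l₁ ∈ L, ∀ l₂ ∈ L, l₁ + l₂ ∈ L) ∧
    (∀ l ∈ L, ∀ m : ℕ, 1 ≤ m →
      ∃ g : Fin m → (X → ℝ), (∀ i, g i ∈ L) ∧ l = ∑ i, g i)

/-- Fenchel conjugate of `f : X → ℝ ∪ {+∞}`: `f*(l) = sup_x (l x - f x)`. -/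
noncomputable def fconj (f : X → EReal) (l : X → ℝ) : EReal :=
  ⨆ x : X, ((l x : EReal) - f x)

/-- Abstract biconjugate `f**(x) = sup_{l ∈ L} (l x - f*(l))`. -/
noncomputable def biconj (L : Set (X → ℝ)) (f : X → EReal) (x : X) : EReal :=
  ⨆ l ∈ L, ((l x : EReal) - fconj f l)

/-- ε-subdifferential of `f` at `x` (empty whenever `x ∉ dom f`, i.e. `f x = ⊤`):
`l ∈ ∂_ε f(x)` iff `l ∈ L`, `f x < ⊤` and `f y - f x - (l y - l x) + ε ≥ 0` for all `y`. -/
def subdiff (L : Set (X → ℝ)) (f : X → EReal) (ε : ℝ) (x : X) : Set (X → ℝ) :=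
  {l | l ∈ L ∧ f x < ⊤ ∧ ∀ y, f x + ((l y - l x : ℝ) : EReal) ≤ f y + (ε : EReal)}

/-- Minkowski sum of finitely many subsets of an additive commutative monoid. -/
def minkSum {α : Type*} [AddCommMonoid α] {m : ℕ} (S : Fin m → Set α) : Set α :=
  {a | ∃ g : Fin m → α, (∀ i, g i ∈ S i) ∧ a = ∑ i, g i}

/-- Infimal convolution (over `L`) of finitely many functions,
with the infimum over the empty set equal to `+∞`. -/
noncomputable def infConv (L : Set (X → ℝ)) {m : ℕ}
    (φ : Fin m → (X → ℝ) → EReal) (l : X → ℝ) : EReal :=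
  ⨅ (g : Fin m → (X → ℝ)) (_ : ∀ i, g i ∈ L) (_ : ∑ i, g i = l), ∑ i, φ i (g i)

/-- The space of abstract affine functions generated by `L`: vertical shifts of members of `L`. -/
def Hspace (L : Set (X → ℝ)) : Set (X → ℝ) :=
  {h | ∃ l ∈ L, ∃ c : ℝ, h = fun x => l x + c}

/-- Support set of `f` inside a family `H` of functions: all members of `H` minorizing `f`. -/
def suppIn (H : Set (X → ℝ)) (f : X → EReal) : Set (X → ℝ) :=
  {h | h ∈ H ∧ ∀ x, (h x : EReal) ≤ f x}

/-- `f` is abstract convex w.r.t. the family `H`: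
`f` is the upper envelope of a nonempty subfamily of `H`. -/
def ConvexIn (H : Set (X → ℝ)) (f : X → EReal) : Prop :=
  ∃ S : Set (X → ℝ), S.Nonempty ∧ S ⊆ H ∧ ∀ x, f x = ⨆ h ∈ S, (h x : EReal)

/-- Abstract convexity of a subset `C` of the family `L` (separation property):
every `l₀ ∈ L \ C` is strictly separated from `C` at some point of `X`. -/
def ConvexSetIn (L : Set (X → ℝ)) (C : Set (X → ℝ)) : Prop :=
  C ⊆ L ∧ ∀ l₀ ∈ L, l₀ ∉ C → ∃ x, (⨆ l ∈ C, (l x : EReal)) < (l₀ x : EReal)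

/-- Epigraph of the conjugate of `f`, as a subset of `𝓛 × ℝ`. -/
def epiConj (L : Set (X → ℝ)) (f : X → EReal) : Set ((X → ℝ) × ℝ) :=
  {p | p.1 ∈ L ∧ fconj f p.1 ≤ (p.2 : EReal)}

/-- The abstract linear function `φ_a : x ↦ a x²` on `ℝ`. -/
noncomputable def phiQ (a : ℝ) : ℝ → ℝ := fun x => a * x ^ 2

/-- The abstract affine function `ψ_{a,b} : x ↦ a x² + b` on `ℝ`. -/
noncomputable def psiQ (a b : ℝ) : ℝ → ℝ := fun x => a * x ^ 2 + b

/-- The space `𝓛 = {φ_a : a ∈ ℝ}` of abstract linear functions on `ℝ`. -/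
def Lq : Set (ℝ → ℝ) := Set.range phiQ

/-- The space `ℋ = {ψ_{a,b} : a, b ∈ ℝ}` of abstract affine functions on `ℝ`. -/
def Hq : Set (ℝ → ℝ) := {h | ∃ a b : ℝ, h = psiQ a b}

/-- (i) if `C ⊆ ℋ` is ℋ-convex with parameter set `A ⊆ ℝ²`
(`C = {ψ_{a,b} : (a,b) ∈ A}`), then `A` is closed, convex and `A − ℝ²₊ ⊆ A`;
(ii) conversely, if `A` is closed, convex, satisfies `A − ℝ²₊ ⊆ A` and the pointwise
supremum of `{ψ_{a,b} : (a,b) ∈ A}` is not identically `+∞`, then the induced set `C`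
is ℋ-convex. -/
lemma psiQ_inj {a b a' b' : ℝ} (h : psiQ a b = psiQ a' b') : a = a' ∧ b = b' := by
  have h0 := congrFun h 0
  have h1 := congrFun h 1
  simp [psiQ] at h0 h1
  constructor <;> linarith

lemma supC_eq (A : Set (ℝ × ℝ)) (x : ℝ) :
    (⨆ l ∈ {h | ∃ p ∈ A, h = psiQ p.1 p.2}, ((l x : ℝ) : EReal))
      = ⨆ p ∈ A, ((psiQ p.1 p.2 x : ℝ) : EReal) := by
  apply le_antisymm
  · apply iSup₂_le
    rintro l ⟨p, hp, rfl⟩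
    exact le_iSup₂ (f := fun p (_ : p ∈ A) => ((psiQ p.1 p.2 x : ℝ) : EReal)) p hp
  · apply iSup₂_le
    intro p hp
    exact le_iSup₂ (f := fun l (_ : l ∈ {h | ∃ p ∈ A, h = psiQ p.1 p.2}) => ((l x : ℝ) : EReal))
      (psiQ p.1 p.2) ⟨p, hp, rfl⟩

theorem stmt18 :
    (∀ (C : Set (ℝ → ℝ)) (A : Set (ℝ × ℝ)),
      ConvexSetIn Hq C → C = {h | ∃ p ∈ A, h = psiQ p.1 p.2} →
      IsClosed A ∧ Convex ℝ A ∧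
        (∀ p ∈ A, ∀ q : ℝ × ℝ, 0 ≤ q.1 → 0 ≤ q.2 → p - q ∈ A)) ∧
    (∀ A : Set (ℝ × ℝ), IsClosed A → Convex ℝ A →
      (∀ p ∈ A, ∀ q : ℝ × ℝ, 0 ≤ q.1 → 0 ≤ q.2 → p - q ∈ A) →
      (∃ x : ℝ, (⨆ p ∈ A, ((psiQ p.1 p.2 x : ℝ) : EReal)) ≠ ⊤) →
      ConvexSetIn Hq {h | ∃ p ∈ A, h = psiQ p.1 p.2}) := by
  constructor
  · -- Part (i)
    intro C A hconv hCA
    obtain ⟨hCH, hsep⟩ := hconv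
    set S : ℝ → EReal := fun x => ⨆ l ∈ C, ((l x : ℝ) : EReal) with hSdef
    have hmem : ∀ p ∈ A, ∀ x : ℝ, ((p.1 * x ^ 2 + p.2 : ℝ) : EReal) ≤ S x := by
      intro p hp x
      have hpc : psiQ p.1 p.2 ∈ C := by rw [hCA]; exact ⟨p, hp, rfl⟩
      exact le_iSup₂ (f := fun l (_ : l ∈ C) => ((l x : ℝ) : EReal)) (psiQ p.1 p.2) hpc
    have hiff : ∀ p : ℝ × ℝ, p ∈ A ↔ ∀ x : ℝ, ((p.1 * x ^ 2 + p.2 : ℝ) : EReal) ≤ S x := by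
      intro p
      refine ⟨hmem p, fun h => ?_⟩
      by_contra hpA
      have hpc : psiQ p.1 p.2 ∉ C := by
        rw [hCA]
        rintro ⟨q, hq, heq⟩
        obtain ⟨ha, hb⟩ := psiQ_inj heq
        exact hpA (by rwa [show p = q from Prod.ext ha hb])
      obtain ⟨x, hx⟩ := hsep (psiQ p.1 p.2) ⟨p.1, p.2, rfl⟩ hpc
      exact absurd (h x) (not_le.2 hx)
    have hAeq : A = ⋂ x : ℝ, {p : ℝ × ℝ | ((p.1 * x ^ 2 + p.2 : ℝ) : EReal) ≤ S x} := by
      ext p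
      simp only [Set.mem_iInter, Set.mem_setOf_eq]
      exact hiff p
    refine ⟨?_, ?_, ?_⟩
    · rw [hAeq]
      refine isClosed_iInter fun x => ?_
      have hcont : Continuous fun p : ℝ × ℝ => ((p.1 * x ^ 2 + p.2 : ℝ) : EReal) :=
        continuous_coe_real_ereal.comp ((continuous_fst.mul continuous_const).add continuous_snd)
      exact IsClosed.preimage hcont isClosed_Iic
    · rw [hAeq]
      refine convex_iInter fun x => ?_
      intro p hp q hq a b ha hb hab
      simp only [Set.mem_setOf_eq] at hp hq ⊢
      have key : (a • p + b • q).1 * x ^ 2 + (a • p + b • q).2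
          = a * (p.1 * x ^ 2 + p.2) + b * (q.1 * x ^ 2 + q.2) := by
        simp [Prod.smul_def, smul_eq_mul]; ring
      rcases le_total (p.1 * x ^ 2 + p.2) (q.1 * x ^ 2 + q.2) with hle | hle
      · have : (a • p + b • q).1 * x ^ 2 + (a • p + b • q).2 ≤ q.1 * x ^ 2 + q.2 := by
          rw [key]
          have h3 : a * (q.1 * x ^ 2 + q.2) + b * (q.1 * x ^ 2 + q.2) = q.1 * x ^ 2 + q.2 := by
            rw [← add_mul, hab, one_mul]
          nlinarith [mul_le_mul_of_nonneg_left hle ha]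
        exact le_trans (EReal.coe_le_coe_iff.2 this) hq
      · have : (a • p + b • q).1 * x ^ 2 + (a • p + b • q).2 ≤ p.1 * x ^ 2 + p.2 := by
          rw [key]
          have h3 : a * (p.1 * x ^ 2 + p.2) + b * (p.1 * x ^ 2 + p.2) = p.1 * x ^ 2 + p.2 := by
            rw [← add_mul, hab, one_mul]
          nlinarith [mul_le_mul_of_nonneg_left hle hb]
        exact le_trans (EReal.coe_le_coe_iff.2 this) hp
    · intro p hp q hq1 hq2
      rw [hiff]
      intro x
      have h1 := hmem p hp x
      have h2 : (p - q).1 * x ^ 2 + (p - q).2 ≤ p.1 * x ^ 2 + p.2 := by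
        simp only [Prod.fst_sub, Prod.snd_sub]
        nlinarith [sq_nonneg x]
      exact le_trans (EReal.coe_le_coe_iff.2 h2) h1
  · -- Part (ii)
    rintro A hclosed hconv hdown ⟨x₀, hx₀⟩
    refine ⟨?_, ?_⟩
    · rintro h ⟨p, hp, rfl⟩
      exact ⟨p.1, p.2, rfl⟩
    · rintro l₀ ⟨a₀, b₀, rfl⟩ hl₀C
      have hpA : (a₀, b₀) ∉ A := fun h => hl₀C ⟨(a₀, b₀), h, rfl⟩
      rcases A.eq_empty_or_nonempty with hAe | hAne
      · refine ⟨0, ?_⟩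
        rw [supC_eq]
        simp [hAe]
      · obtain ⟨f, c, hfc, hc⟩ := geometric_hahn_banach_closed_point hconv hclosed hpA
        set u : ℝ := f (1, 0) with hu
        set v : ℝ := f (0, 1) with hv
        have hf : ∀ p : ℝ × ℝ, f p = u * p.1 + v * p.2 := by
          intro p
          have hp : p = p.1 • ((1 : ℝ), (0 : ℝ)) + p.2 • ((0 : ℝ), (1 : ℝ)) := by
            simp [Prod.ext_iff]
          conv_lhs => rw [hp]
          rw [map_add, map_smul, map_smul, smul_eq_mul, smul_eq_mul, hu, hv]
          ring
        obtain ⟨p₀, hp₀⟩ := hAne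
        have hfp₀ : f p₀ < c := hfc p₀ hp₀
        have hunn : 0 ≤ u := by
          by_contra hun
          push_neg at hun
          set t : ℝ := (c - f p₀ + 1) / (-u) with ht
          have htpos : 0 ≤ t := by
            apply div_nonneg <;> nlinarith
          have hmem : p₀ - (t, 0) ∈ A := hdown p₀ hp₀ (t, 0) htpos le_rfl
          have hlt := hfc _ hmem
          rw [hf] at hlt
          simp only [Prod.fst_sub, Prod.snd_sub] at hlt
          have hut : u * t = -(c - f p₀ + 1) := by
            rw [ht]; field_simp; rw [mul_div_cancel_left₀ _ hun.ne]
          nlinarith [hf p₀, hut, hlt, hfp₀]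
        have hvnn : 0 ≤ v := by
          by_contra hvn
          push_neg at hvn
          set t : ℝ := (c - f p₀ + 1) / (-v) with ht
          have htpos : 0 ≤ t := by
            apply div_nonneg <;> nlinarith
          have hmem : p₀ - (0, t) ∈ A := hdown p₀ hp₀ (0, t) le_rfl htpos
          have hlt := hfc _ hmem
          rw [hf] at hlt
          simp only [Prod.fst_sub, Prod.snd_sub] at hlt
          have hvt : v * t = -(c - f p₀ + 1) := by
            rw [ht]; field_simp; rw [mul_div_cancel_left₀ _ hvn.ne]
          nlinarith [hf p₀, hvt, hlt, hfp₀]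
        have hab₀ : u * a₀ + v * b₀ > c := by
          have := hc; rw [hf] at this; simpa using this
        rcases lt_or_eq_of_le hvnn with hvpos | hv0
        · -- v > 0
          set t : ℝ := u / v with ht
          have htnn : 0 ≤ t := div_nonneg hunn hvpos.le
          refine ⟨Real.sqrt t, ?_⟩
          rw [supC_eq]
          have hsq : Real.sqrt t ^ 2 = t := Real.sq_sqrt htnn
          have hbound : (⨆ p ∈ A, ((psiQ p.1 p.2 (Real.sqrt t) : ℝ) : EReal)) ≤ ((c / v : ℝ) : EReal) := by
            apply iSup₂_le
            intro p hp
            apply EReal.coe_le_coe_iff.2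
            have := hfc p hp
            rw [hf] at this
            show p.1 * Real.sqrt t ^ 2 + p.2 ≤ c / v
            rw [hsq, ht, le_div_iff₀ hvpos]
            have heq : (p.1 * (u / v) + p.2) * v = u * p.1 + v * p.2 := by
              field_simp
            linarith [heq]
          refine lt_of_le_of_lt hbound ?_
          apply EReal.coe_lt_coe_iff.2
          show c / v < a₀ * Real.sqrt t ^ 2 + b₀
          rw [hsq, ht, div_lt_iff₀ hvpos]
          have heq : (a₀ * (u / v) + b₀) * v = u * a₀ + v * b₀ := by
            field_simp
          linarith [heq]
        · -- v = 0
          have hv0' : v = 0 := hv0.symm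
          have hupos : 0 < u := by
            rcases lt_or_eq_of_le hunn with h | h
            · exact h
            · exfalso
              rw [hf] at hfp₀
              rw [← h, hv0'] at hfp₀ hab₀
              simp at hfp₀ hab₀
              linarith
          set α : ℝ := c / u with hα
          have hαlt : α < a₀ := by
            rw [hα, div_lt_iff₀ hupos]
            rw [hv0'] at hab₀; nlinarith
          have hple : ∀ p ∈ A, p.1 ≤ α := by
            intro p hp
            have := hfc p hp
            rw [hf, hv0'] at this
            rw [hα, le_div_iff₀ hupos]
            nlinarith
          -- get bound M at x₀
          have hSne_bot : (⨆ p ∈ A, ((psiQ p.1 p.2 x₀ : ℝ) : EReal)) ≠ ⊥ := by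
            have : ((psiQ p₀.1 p₀.2 x₀ : ℝ) : EReal) ≤ ⨆ p ∈ A, ((psiQ p.1 p.2 x₀ : ℝ) : EReal) :=
              le_iSup₂ (f := fun p (_ : p ∈ A) => ((psiQ p.1 p.2 x₀ : ℝ) : EReal)) p₀ hp₀
            intro hbot
            rw [hbot] at this
            exact (EReal.coe_ne_bot _) (le_bot_iff.1 this)
          set M : ℝ := (⨆ p ∈ A, ((psiQ p.1 p.2 x₀ : ℝ) : EReal)).toReal with hM
          have hMle : ∀ p ∈ A, p.1 * x₀ ^ 2 + p.2 ≤ M := by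
            intro p hp
            have hle : ((psiQ p.1 p.2 x₀ : ℝ) : EReal) ≤ ⨆ p ∈ A, ((psiQ p.1 p.2 x₀ : ℝ) : EReal) :=
              le_iSup₂ (f := fun p (_ : p ∈ A) => ((psiQ p.1 p.2 x₀ : ℝ) : EReal)) p hp
            have heq : (⨆ p ∈ A, ((psiQ p.1 p.2 x₀ : ℝ) : EReal)) = (M : EReal) :=
              (EReal.coe_toReal hx₀ hSne_bot).symm
            rw [heq] at hle
            exact EReal.coe_le_coe_iff.1 hle
          set T : ℝ := max (x₀ ^ 2) ((M - α * x₀ ^ 2 - b₀) / (a₀ - α) + 1) with hT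
          have hTnn : 0 ≤ T := le_trans (sq_nonneg x₀) (le_max_left _ _)
          have hTx₀ : x₀ ^ 2 ≤ T := le_max_left _ _
          have hTbig : (M - α * x₀ ^ 2 - b₀) / (a₀ - α) + 1 ≤ T := le_max_right _ _
          refine ⟨Real.sqrt T, ?_⟩
          rw [supC_eq]
          have hsq : Real.sqrt T ^ 2 = T := Real.sq_sqrt hTnn
          set B : ℝ := M + α * (T - x₀ ^ 2) with hB
          have hbound : (⨆ p ∈ A, ((psiQ p.1 p.2 (Real.sqrt T) : ℝ) : EReal)) ≤ ((B : ℝ) : EReal) := by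
            apply iSup₂_le
            intro p hp
            apply EReal.coe_le_coe_iff.2
            show p.1 * Real.sqrt T ^ 2 + p.2 ≤ B
            rw [hsq, hB]
            have h1 := hMle p hp
            have h2 := hple p hp
            nlinarith
          refine lt_of_le_of_lt hbound ?_
          apply EReal.coe_lt_coe_iff.2
          show B < a₀ * Real.sqrt T ^ 2 + b₀
          rw [hsq, hB]
          have hd : 0 < a₀ - α := by linarith
          have : (M - α * x₀ ^ 2 - b₀) ≤ (a₀ - α) * ((M - α * x₀ ^ 2 - b₀) / (a₀ - α)) := by
            rw [mul_div_cancel₀ _ (ne_of_gt hd)]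
          nlinarith
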